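/- (Deterministic form of Theorem 4.1, 'regret guarantee for VLPR'.) Let MG be an m-player finite Markov game and T ∈ ℕ. Suppose given Markov joint policies π^1,…,π^T, functions \bar V^t_{i,h}: S → ℝ (with \bar V^t_{i,H+1} ≡ 0) and bonus functions g^t_{i,h}: S → [0,∞) for t ∈ {0,…,T−1}, i ∈ [m], h ∈ [H], satisfying for every t ∈ [T], i ∈ [m], h ∈ [H], s ∈ S: (1A) max_{μ_i ∈ Δ(A_i)} (D_{μ_i×π^t_{-i,h}} − D_{π^t_h})[ r_{i,h} + P_h \bar V^t_{i,h+1} ](s) ≤ g^{t−1}_{i,h}(s); (1B) min{ D_{π^t_h}[ r_{i,h} + P_h \bar V^t_{i,h+1} ](s) + g^{t−1}_{i,h}(s), H−h+1 } ≤ \bar V^t_{i,h}(s) ≤ D_{π^t_h}[ r_{i,h} + P_h \bar V^t_{i,h+1} ](s) + 2 g^{t−1}_{i,h}(s); and (1C) for some B ≥ 0 and all i ∈ [m], h ∈ [H]: Σ_{t=1}^{T} E_{s_h ∼ π^t}[ g^{t−1}_{i,h}(s_h) ] ≤ B, where E_{s_h∼π^t} is over the state at step h when running π^t from s_1. Then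 CCEReg(T) := max_{i∈[m]} Σ_{t=1}^T [ V^{†,π^t_{-i}}_{i,1}(s_1) − V^{π^t}_{i,1}(s_1) ]_+ ≤ 2HB. In particular, if B = √(L T log²(T/δ)) then CCEReg(T) ≤ 2H √(LT) log(T/δ). -/

import Mathlib

open Finset

/-- A probability vector on a finite type. -/
def IsDist {α : Type*} [Fintype α] (p : α → ℝ) : Prop :=
  (∀ a, 0 ≤ p a) ∧ ∑ a, p a = 1

/-- Combine player `i`'s action with a profile of actions of the other players into a
joint action. -/
def combine {m : ℕ} {A : Fin m → Type*} (i : Fin m) (ai : A i)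
    (an : ∀ j : {j : Fin m // j ≠ i}, A j.1) (j : Fin m) : A j :=
  if h : j = i then cast (congrArg A h).symm ai else an ⟨j, h⟩

/-- Restrict a joint action to the players other than `i`. -/
def restrict {m : ℕ} {A : Fin m → Type*} (i : Fin m) (a : ∀ j, A j)
    (j : {j : Fin m // j ≠ i}) : A j.1 :=
  a j.1

/-- Marginal, on the actions of all players other than `i`, of a distribution `p` over
joint actions. -/
noncomputable def marg {m : ℕ} {A : Fin m → Type*} [∀ j, Fintype (A j)] (i : Fin m)
    (p : (∀ j, A j) → ℝ) (an : ∀ j : {j : Fin m // j ≠ i}, A j.1) : ℝ :=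
  ∑ ai : A i, p (combine i ai an)

/-- The value function `V^π_h(s)` of a Markov joint policy `π` (zero-based steps,
`jointV H P rew π H s = 0`). -/
noncomputable def jointV {S : Type*} [Fintype S] {m : ℕ} {A : Fin m → Type*}
    [∀ j, Fintype (A j)] (H : ℕ) (P : ℕ → S → (∀ j, A j) → S → ℝ)
    (rew : ℕ → S → (∀ j, A j) → ℝ) (π : ℕ → S → (∀ j, A j) → ℝ) : ℕ → S → ℝ
  | h, s =>
    if _hh : h < H then
      ∑ a, π h s a * (rew h s a + ∑ s', P h s a s' * jointV H P rew π (h + 1) s')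
    else 0
  termination_by h _ => H - h
  decreasing_by omega

/-- The distribution of the state `s_h` at step `h` when running the Markov joint
policy `π` from the initial state `s1` (zero-based steps). -/
noncomputable def stateDist {S : Type*} [Fintype S] [DecidableEq S] {m : ℕ}
    {A : Fin m → Type*} [∀ j, Fintype (A j)]
    (P : ℕ → S → (∀ j, A j) → S → ℝ) (π : ℕ → S → (∀ j, A j) → ℝ) (s1 : S) :
    ℕ → S → ℝ
  | 0, s => if s = s1 then 1 else 0
  | (h + 1), s' => ∑ s, ∑ a, stateDist P π s1 h s * π h s a * P h s a s'

lemma combine_same {m : ℕ} {A : Fin m → Type*} (i : Fin m) (ai : A i)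
    (an : ∀ j : {j : Fin m // j ≠ i}, A j.1) : combine i ai an i = ai := by
  simp [combine]

lemma restrict_combine {m : ℕ} {A : Fin m → Type*} (i : Fin m) (ai : A i)
    (an : ∀ j : {j : Fin m // j ≠ i}, A j.1) : restrict i (combine i ai an) = an := by
  funext j
  simp only [_root_.restrict, combine, dif_neg j.2]

lemma combine_restrict {m : ℕ} {A : Fin m → Type*} (i : Fin m) (a : ∀ j, A j) :
    combine i (a i) (restrict i a) = a := by
  funext j
  by_cases h : j = i
  · subst h; simp [combine]
  · simp only [_root_.restrict, combine, dif_neg h]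

noncomputable def jointEquiv {m : ℕ} (A : Fin m → Type*) [∀ j, Fintype (A j)] (i : Fin m) :
    (∀ j, A j) ≃ A i × (∀ j : {j : Fin m // j ≠ i}, A j.1) where
  toFun a := (a i, restrict i a)
  invFun p := combine i p.1 p.2
  left_inv a := combine_restrict i a
  right_inv p := Prod.ext (combine_same i p.1 p.2) (restrict_combine i p.1 p.2)

lemma sum_split {m : ℕ} {A : Fin m → Type*} [∀ j, Fintype (A j)] (i : Fin m)
    (F : (∀ j, A j) → ℝ) :
    ∑ a, F a = ∑ ai : A i, ∑ an : ∀ j : {j : Fin m // j ≠ i}, A j.1, F (combine i ai an) := by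
  have : ∑ a, F a = ∑ p : A i × (∀ j : {j : Fin m // j ≠ i}, A j.1), F (combine i p.1 p.2) :=
    Fintype.sum_equiv (jointEquiv A i) _ _
      (fun a => by simp only [jointEquiv, Equiv.coe_fn_mk, combine_restrict])
  rw [this, Fintype.sum_prod_type]

lemma marg_nonneg {m : ℕ} {A : Fin m → Type*} [∀ j, Fintype (A j)] (i : Fin m)
    {p : (∀ j, A j) → ℝ} (hp : ∀ a, 0 ≤ p a) (an : ∀ j : {j : Fin m // j ≠ i}, A j.1) :
    0 ≤ marg i p an :=
  Finset.sum_nonneg fun _ _ => hp _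

lemma dag_sum_one {m : ℕ} {A : Fin m → Type*} [∀ j, Fintype (A j)] (i : Fin m)
    {μ : A i → ℝ} {p : (∀ j, A j) → ℝ} (hμ : IsDist μ) (hp : IsDist p) :
    ∑ a, μ (a i) * marg i p (restrict i a) = 1 := by
  rw [sum_split i]
  simp only [combine_same, restrict_combine]
  have h1 : ∀ an : ∀ j : {j : Fin m // j ≠ i}, A j.1, True := fun _ => trivial
  have : ∑ ai : A i, ∑ an : ∀ j : {j : Fin m // j ≠ i}, A j.1, μ ai * marg i p an
      = ∑ ai : A i, μ ai * ∑ an : ∀ j : {j : Fin m // j ≠ i}, A j.1, marg i p an := by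
    simp [Finset.mul_sum]
  rw [this]
  have h2 : ∑ an : ∀ j : {j : Fin m // j ≠ i}, A j.1, marg i p an = 1 := by
    unfold marg
    rw [Finset.sum_comm, ← sum_split i, hp.2]
  simp [h2, hμ.2]


/-- deterministic form of the V-Learning with Policy Replay regret
guarantee.  Rounds are indexed by `t ∈ {0, …, T-1}` (zero-based, so round `t` here is
round `t+1` of the informal statement, with value estimates `Vbar t` and bonuses `g t`
playing the roles of `V̄^{t+1}` and `g^t`).  Under the per-state no-regret condition
(1A), the optimistic sandwich condition (1B), and the pigeonhole condition (1C), the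
CCE-regret `max_i ∑_t [V^{†,π^t_{-i}}_{i,1}(s_1) - V^{π^t}_{i,1}(s_1)]_+` is at most
`2 H B`; the best response over Markov deviation policies is expressed by quantifying
over all (round-dependent) Markov deviation policies `πdag` of player `i`. -/
theorem statement_2 {S : Type*} [Fintype S] [DecidableEq S] {m H T : ℕ}
    {A : Fin m → Type*} [∀ j, Fintype (A j)]
    (P : ℕ → S → (∀ j, A j) → S → ℝ)
    (hP : ∀ h < H, ∀ s a, IsDist (P h s a))
    (rew : Fin m → ℕ → S → (∀ j, A j) → ℝ)
    (hrew : ∀ i, ∀ h < H, ∀ s a, rew i h s a ∈ Set.Icc (0 : ℝ) 1)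
    (s1 : S)
    (πt : ℕ → ℕ → S → (∀ j, A j) → ℝ)
    (hπt : ∀ t < T, ∀ h < H, ∀ s, IsDist (πt t h s))
    (Vbar : ℕ → Fin m → ℕ → S → ℝ)
    (hVbarH : ∀ t < T, ∀ i s, Vbar t i H s = 0)
    (g : ℕ → Fin m → ℕ → S → ℝ)
    (hg : ∀ t < T, ∀ i, ∀ h < H, ∀ s, 0 ≤ g t i h s)
    (B : ℝ)
    -- (1A) per-state no-regret
    (h1A : ∀ t < T, ∀ i : Fin m, ∀ h < H, ∀ s, ∀ μ : A i → ℝ, IsDist μ →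
      (∑ a, μ (a i) * marg i (πt t h s) (restrict i a) *
          (rew i h s a + ∑ s', P h s a s' * Vbar t i (h + 1) s')) -
        (∑ a, πt t h s a * (rew i h s a + ∑ s', P h s a s' * Vbar t i (h + 1) s'))
        ≤ g t i h s)
    -- (1B) optimistic V-estimates
    (h1B : ∀ t < T, ∀ i : Fin m, ∀ h < H, ∀ s,
      min ((∑ a, πt t h s a * (rew i h s a + ∑ s', P h s a s' * Vbar t i (h + 1) s'))
            + g t i h s) ((H : ℝ) - (h : ℝ))
        ≤ Vbar t i h s ∧
      Vbar t i h s
        ≤ (∑ a, πt t h s a * (rew i h s a + ∑ s', P h s a s' * Vbar t i (h + 1) s'))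
            + 2 * g t i h s)
    -- (1C) pigeonhole condition
    (h1C : ∀ i : Fin m, ∀ h < H,
      ∑ t ∈ Finset.range T, ∑ s, stateDist P (πt t) s1 h s * g t i h s ≤ B) :
    ∀ i : Fin m, ∀ πdag : ℕ → ℕ → S → A i → ℝ,
      (∀ t < T, ∀ h < H, ∀ s, IsDist (πdag t h s)) →
      ∑ t ∈ Finset.range T,
          max (jointV H P (rew i)
                (fun h s a => πdag t h s (a i) * marg i (πt t h s) (restrict i a)) 0 s1
              - jointV H P (rew i) (πt t) 0 s1) 0
        ≤ 2 * H * B := by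
  intro i πdag hπdag
  -- nonnegativity of state distribution
  have hdnn : ∀ t < T, ∀ h ≤ H, ∀ s, 0 ≤ stateDist P (πt t) s1 h s := by
    intro t ht h
    induction h with
    | zero =>
      intro _ s; rw [stateDist]; split <;> norm_num
    | succ h ih =>
      intro hH s'
      rw [stateDist]
      refine Finset.sum_nonneg fun s _ => Finset.sum_nonneg fun a _ => ?_
      exact mul_nonneg (mul_nonneg (ih (by omega) s) ((hπt t ht h (by omega) s).1 a))
        ((hP h (by omega) s a).1 s')
  -- telescoping identity for the state distribution
  have htele : ∀ t, ∀ h, ∀ f : S → ℝ,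
      ∑ s, stateDist P (πt t) s1 h s * ∑ a, πt t h s a * ∑ s', P h s a s' * f s'
        = ∑ s', stateDist P (πt t) s1 (h + 1) s' * f s' := by
    intro t h f
    have hst : ∀ s', stateDist P (πt t) s1 (h + 1) s'
        = ∑ s, ∑ a, stateDist P (πt t) s1 h s * πt t h s a * P h s a s' := fun s' => by
      rw [stateDist]
    calc ∑ s, stateDist P (πt t) s1 h s * ∑ a, πt t h s a * ∑ s', P h s a s' * f s'
        = ∑ s, ∑ a, ∑ s', stateDist P (πt t) s1 h s * πt t h s a * P h s a s' * f s' := by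
          refine Finset.sum_congr rfl fun s _ => ?_
          rw [Finset.mul_sum]
          refine Finset.sum_congr rfl fun a _ => ?_
          rw [Finset.mul_sum, Finset.mul_sum]
          exact Finset.sum_congr rfl fun s' _ => by ring
      _ = ∑ s, ∑ s', ∑ a, stateDist P (πt t) s1 h s * πt t h s a * P h s a s' * f s' :=
          Finset.sum_congr rfl fun s _ => Finset.sum_comm
      _ = ∑ s', ∑ s, ∑ a, stateDist P (πt t) s1 h s * πt t h s a * P h s a s' * f s' :=
          Finset.sum_comm
      _ = ∑ s', stateDist P (πt t) s1 (h + 1) s' * f s' := by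
          refine Finset.sum_congr rfl fun s' _ => ?_
          rw [hst s', Finset.sum_mul]
          exact Finset.sum_congr rfl fun s _ => (Finset.sum_mul _ _ _).symm
  -- optimism: the deviation value is bounded by H - h and by Vbar
  have hVle : ∀ t, t < T → ∀ k h, H ≤ h + k → h ≤ H → ∀ s,
      jointV H P (rew i)
          (fun h s a => πdag t h s (a i) * marg i (πt t h s) (restrict i a)) h s
        ≤ (H : ℝ) - (h : ℝ) ∧
      jointV H P (rew i)
          (fun h s a => πdag t h s (a i) * marg i (πt t h s) (restrict i a)) h s
        ≤ Vbar t i h s := by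
    intro t ht k
    induction k with
    | zero =>
      intro h hk hH s
      have hEq : h = H := by omega
      rw [jointV, dif_neg (by omega : ¬ h < H)]
      constructor
      · have : (h : ℝ) = (H : ℝ) := by exact_mod_cast hEq
        linarith
      · rw [hEq, hVbarH t ht i s]
    | succ k ih =>
      intro h hk hH s
      by_cases hhH : h < H
      · rw [jointV, dif_pos hhH]
        have hDnn : ∀ a : ∀ j, A j,
            0 ≤ πdag t h s (a i) * marg i (πt t h s) (restrict i a) := fun a =>
          mul_nonneg ((hπdag t ht h hhH s).1 _)
            (marg_nonneg i (hπt t ht h hhH s).1 _)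
        have hDsum : ∑ a, πdag t h s (a i) * marg i (πt t h s) (restrict i a) = 1 :=
          dag_sum_one i (hπdag t ht h hhH s) (hπt t ht h hhH s)
        have hih := fun s' => ih (h + 1) (by omega) (by omega) s'
        -- claim 1 : bounded by H - h
        have claim1 : ∑ a, πdag t h s (a i) * marg i (πt t h s) (restrict i a) *
            (rew i h s a + ∑ s', P h s a s' *
              jointV H P (rew i)
                (fun h s a => πdag t h s (a i) * marg i (πt t h s) (restrict i a))
                (h + 1) s')
            ≤ (H : ℝ) - (h : ℝ) := by
          have step : ∀ a : ∀ j, A j,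
              rew i h s a + ∑ s', P h s a s' *
                jointV H P (rew i)
                  (fun h s a => πdag t h s (a i) * marg i (πt t h s) (restrict i a))
                  (h + 1) s' ≤ (H : ℝ) - (h : ℝ) := by
            intro a
            have hsum : ∑ s', P h s a s' *
                jointV H P (rew i)
                  (fun h s a => πdag t h s (a i) * marg i (πt t h s) (restrict i a))
                  (h + 1) s' ≤ (H : ℝ) - ((h : ℝ) + 1) := by
              calc ∑ s', P h s a s' *
                  jointV H P (rew i)
                    (fun h s a => πdag t h s (a i) * marg i (πt t h s) (restrict i a))
                    (h + 1) s'
                  ≤ ∑ s', P h s a s' * ((H : ℝ) - ((h : ℝ) + 1)) := by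
                    refine Finset.sum_le_sum fun s' _ => ?_
                    refine mul_le_mul_of_nonneg_left ?_ ((hP h hhH s a).1 s')
                    have := (hih s').1
                    push_cast at this ⊢
                    linarith
                _ = (H : ℝ) - ((h : ℝ) + 1) := by
                    rw [← Finset.sum_mul, (hP h hhH s a).2, one_mul]
            have hr := (hrew i h hhH s a).2
            linarith
          calc ∑ a, πdag t h s (a i) * marg i (πt t h s) (restrict i a) *
              (rew i h s a + ∑ s', P h s a s' *
                jointV H P (rew i)
                  (fun h s a => πdag t h s (a i) * marg i (πt t h s) (restrict i a))
                  (h + 1) s')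
              ≤ ∑ a, πdag t h s (a i) * marg i (πt t h s) (restrict i a) *
                  ((H : ℝ) - (h : ℝ)) := by
                refine Finset.sum_le_sum fun a _ => ?_
                exact mul_le_mul_of_nonneg_left (step a) (hDnn a)
            _ = (H : ℝ) - (h : ℝ) := by rw [← Finset.sum_mul, hDsum, one_mul]
        -- claim 2 : bounded by the one-step Q with Vbar, plus 1A
        have claim2 : ∑ a, πdag t h s (a i) * marg i (πt t h s) (restrict i a) *
            (rew i h s a + ∑ s', P h s a s' *
              jointV H P (rew i)
                (fun h s a => πdag t h s (a i) * marg i (πt t h s) (restrict i a))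
                (h + 1) s')
            ≤ (∑ a, πt t h s a *
                (rew i h s a + ∑ s', P h s a s' * Vbar t i (h + 1) s')) + g t i h s := by
          have step : ∑ a, πdag t h s (a i) * marg i (πt t h s) (restrict i a) *
              (rew i h s a + ∑ s', P h s a s' *
                jointV H P (rew i)
                  (fun h s a => πdag t h s (a i) * marg i (πt t h s) (restrict i a))
                  (h + 1) s')
              ≤ ∑ a, πdag t h s (a i) * marg i (πt t h s) (restrict i a) *
                (rew i h s a + ∑ s', P h s a s' * Vbar t i (h + 1) s') := by
            refine Finset.sum_le_sum fun a _ => ?_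
            refine mul_le_mul_of_nonneg_left ?_ (hDnn a)
            refine add_le_add (le_refl _) (Finset.sum_le_sum fun s' _ => ?_)
            exact mul_le_mul_of_nonneg_left (hih s').2 ((hP h hhH s a).1 s')
          have h1a := h1A t ht i h hhH s (πdag t h s) (hπdag t ht h hhH s)
          linarith
        refine ⟨claim1, ?_⟩
        have hmin := (h1B t ht i h hhH s).1
        exact le_trans (le_min claim2 claim1) hmin
      · have hEq : h = H := by omega
        rw [jointV, dif_neg (by omega : ¬ h < H)]
        constructor
        · have : (h : ℝ) = (H : ℝ) := by exact_mod_cast hEq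
          linarith
        · rw [hEq, hVbarH t ht i s]
  -- gap lemma
  have hgap : ∀ t, t < T → ∀ k h, H ≤ h + k → h ≤ H →
      ∑ s, stateDist P (πt t) s1 h s *
          (Vbar t i h s - jointV H P (rew i) (πt t) h s)
        ≤ 2 * ∑ h' ∈ Finset.Ico h H, ∑ s, stateDist P (πt t) s1 h' s * g t i h' s := by
    intro t ht k
    induction k with
    | zero =>
      intro h hk hH
      have hEq : h = H := by omega
      rw [hEq]
      have hz : ∀ s, Vbar t i H s - jointV H P (rew i) (πt t) H s = 0 := fun s => by
        rw [hVbarH t ht i s, jointV, dif_neg (lt_irrefl H)]; ring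
      simp [hz, Finset.Ico_self]
    | succ k ih =>
      intro h hk hH
      by_cases hhH : h < H
      · have key : ∀ s, Vbar t i h s - jointV H P (rew i) (πt t) h s ≤
            (∑ a, πt t h s a * ∑ s', P h s a s' *
              (Vbar t i (h + 1) s' - jointV H P (rew i) (πt t) (h + 1) s'))
            + 2 * g t i h s := by
          intro s
          have h2 := (h1B t ht i h hhH s).2
          rw [jointV, dif_pos hhH]
          have expand : (∑ a, πt t h s a *
                (rew i h s a + ∑ s', P h s a s' * Vbar t i (h + 1) s'))
              - (∑ a, πt t h s a *
                (rew i h s a + ∑ s', P h s a s' * jointV H P (rew i) (πt t) (h + 1) s'))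
              = ∑ a, πt t h s a * ∑ s', P h s a s' *
                  (Vbar t i (h + 1) s' - jointV H P (rew i) (πt t) (h + 1) s') := by
            rw [← Finset.sum_sub_distrib]
            refine Finset.sum_congr rfl fun a _ => ?_
            have hin : ∑ s', P h s a s' *
                (Vbar t i (h + 1) s' - jointV H P (rew i) (πt t) (h + 1) s')
                = (∑ s', P h s a s' * Vbar t i (h + 1) s')
                  - ∑ s', P h s a s' * jointV H P (rew i) (πt t) (h + 1) s' := by
              rw [← Finset.sum_sub_distrib]
              exact Finset.sum_congr rfl fun s' _ => mul_sub _ _ _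
            rw [hin]; ring
          linarith
        have hstep1 : ∑ s, stateDist P (πt t) s1 h s *
              (Vbar t i h s - jointV H P (rew i) (πt t) h s)
            ≤ ∑ s, stateDist P (πt t) s1 h s *
              ((∑ a, πt t h s a * ∑ s', P h s a s' *
                (Vbar t i (h + 1) s' - jointV H P (rew i) (πt t) (h + 1) s'))
               + 2 * g t i h s) :=
          Finset.sum_le_sum fun s _ =>
            mul_le_mul_of_nonneg_left (key s) (hdnn t ht h hH s)
        have hstep2 : ∑ s, stateDist P (πt t) s1 h s *
              ((∑ a, πt t h s a * ∑ s', P h s a s' *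
                (Vbar t i (h + 1) s' - jointV H P (rew i) (πt t) (h + 1) s'))
               + 2 * g t i h s)
            = (∑ s', stateDist P (πt t) s1 (h + 1) s' *
                (Vbar t i (h + 1) s' - jointV H P (rew i) (πt t) (h + 1) s'))
              + 2 * ∑ s, stateDist P (πt t) s1 h s * g t i h s := by
          rw [← htele t h
            (fun s' => Vbar t i (h + 1) s' - jointV H P (rew i) (πt t) (h + 1) s')]
          rw [Finset.mul_sum, ← Finset.sum_add_distrib]
          exact Finset.sum_congr rfl fun s _ => by ring
        have hih := ih (h + 1) (by omega) (by omega)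
        have hsplit : ∑ h' ∈ Finset.Ico h H, ∑ s, stateDist P (πt t) s1 h' s * g t i h' s
            = (∑ s, stateDist P (πt t) s1 h s * g t i h s)
              + ∑ h' ∈ Finset.Ico (h + 1) H, ∑ s, stateDist P (πt t) s1 h' s * g t i h' s :=
          Finset.sum_eq_sum_Ico_succ_bot hhH _
        rw [hsplit]
        linarith
      · have hEq : h = H := by omega
        rw [hEq]
        have hz : ∀ s, Vbar t i H s - jointV H P (rew i) (πt t) H s = 0 := fun s => by
          rw [hVbarH t ht i s, jointV, dif_neg (lt_irrefl H)]; ring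
        simp [hz, Finset.Ico_self]
  -- assemble
  calc ∑ t ∈ Finset.range T,
        max (jointV H P (rew i)
              (fun h s a => πdag t h s (a i) * marg i (πt t h s) (restrict i a)) 0 s1
            - jointV H P (rew i) (πt t) 0 s1) 0
      ≤ ∑ t ∈ Finset.range T,
          2 * ∑ h' ∈ Finset.Ico 0 H, ∑ s, stateDist P (πt t) s1 h' s * g t i h' s := by
        refine Finset.sum_le_sum fun t htm => ?_
        have ht : t < T := Finset.mem_range.mp htm
        have hRnn : (0 : ℝ) ≤ 2 * ∑ h' ∈ Finset.Ico 0 H,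
            ∑ s, stateDist P (πt t) s1 h' s * g t i h' s := by
          refine mul_nonneg (by norm_num) (Finset.sum_nonneg fun h' hh' => ?_)
          have hh'H : h' < H := (Finset.mem_Ico.mp hh').2
          exact Finset.sum_nonneg fun s _ =>
            mul_nonneg (hdnn t ht h' (le_of_lt hh'H) s) (hg t ht i h' hh'H s)
        refine max_le ?_ hRnn
        have h1 := (hVle t ht H 0 (by omega) (by omega) s1).2
        have h2 := hgap t ht H 0 (by omega) (by omega)
        have h3 : ∑ s, stateDist P (πt t) s1 0 s *
              (Vbar t i 0 s - jointV H P (rew i) (πt t) 0 s)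
            = Vbar t i 0 s1 - jointV H P (rew i) (πt t) 0 s1 := by
          have hst0 : ∀ s : S, stateDist P (πt t) s1 0 s = if s = s1 then 1 else 0 :=
            fun s => by rw [stateDist]
          simp only [hst0, ite_mul, one_mul, zero_mul]
          rw [Finset.sum_ite_eq' Finset.univ s1
            (fun s => Vbar t i 0 s - jointV H P (rew i) (πt t) 0 s)]
          simp
        rw [h3] at h2
        linarith
    _ = 2 * ∑ h' ∈ Finset.Ico 0 H, ∑ t ∈ Finset.range T,
          ∑ s, stateDist P (πt t) s1 h' s * g t i h' s := by
        rw [← Finset.mul_sum, Finset.sum_comm]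
    _ ≤ 2 * ∑ h' ∈ Finset.Ico 0 H, B := by
        refine mul_le_mul_of_nonneg_left (Finset.sum_le_sum fun h' hh' => ?_) (by norm_num)
        exact h1C i h' (Finset.mem_Ico.mp hh').2
    _ = 2 * H * B := by
        rw [Finset.sum_const, Nat.card_Ico]
        simp [mul_assoc]
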